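/- arXiv:2509.05673 — 2 statements merged into one kernel-verified Lean document; each statement's English description precedes it below -/
import Mathlib

section
/- For a ring R and n ≥ 2, the upper triangular matrix ring T_n(R) is weakly strongly 2-nil-clean if and only if R is strongly 2-nil-clean; moreover, in this case T_n(R) is strongly 2-nil-clean. -/
/-- A ring is weakly strongly 2-nil-clean if every element is `±e ± f + n` with
`e, f` idempotents and `n` nilpotent, all commuting with each other. -/
def IsWeaklyStrongly2NilClean (R : Type*) [Ring R] : Prop :=
  ∀ a : R, ∃ e f n : R, IsIdempotentElem e ∧ IsIdempotentElem f ∧ IsNilpotent n ∧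
    Commute e f ∧ Commute e n ∧ Commute f n ∧
    (a = e + f + n ∨ a = e - f + n ∨ a = -e + f + n ∨ a = -e - f + n)

/-- A ring is strongly 2-nil-clean if every element is `e + f + n` with
`e, f` idempotents and `n` nilpotent, all commuting with each other. -/
def IsStrongly2NilClean (R : Type*) [Ring R] : Prop :=
  ∀ a : R, ∃ e f n : R, IsIdempotentElem e ∧ IsIdempotentElem f ∧ IsNilpotent n ∧
    Commute e f ∧ Commute e n ∧ Commute f n ∧ a = e + f + n

/-- The subring of upper triangular `n × n` matrices over `R`. -/
def upperTriangularRing (R : Type*) [Ring R] (n : ℕ) :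
    Subring (Matrix (Fin n) (Fin n) R) where
  carrier := {M | ∀ i j : Fin n, j < i → M i j = 0}
  mul_mem' := by
    intro M N hM hN i j hij
    simp only [Matrix.mul_apply]
    refine Finset.sum_eq_zero fun k _ => ?_
    rcases lt_or_ge k i with h | h
    · rw [hM i k h, zero_mul]
    · rw [hN k j (lt_of_lt_of_le hij h), mul_zero]
  one_mem' := fun i j hij => Matrix.one_apply_ne (ne_of_gt hij)
  add_mem' := by
    intro M N hM hN i j hij
    simp [Matrix.add_apply, hM i j hij, hN i j hij]
  zero_mem' := fun i j _ => rfl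
  neg_mem' := by
    intro M hM i j hij
    simp [Matrix.neg_apply, hM i j hij]


set_option maxHeartbeats 1000000
set_option synthInstance.maxHeartbeats 200000



section CommPart

variable {S : Type*} [Ring S] (hcomm : ∀ x y : S, x * y = y * x)

include hcomm

private lemma lift_idem_aux :
    ∀ (k : ℕ) (x : S), (x - x ^ 2) ^ k = 0 →
      ∃ e : S, IsIdempotentElem e ∧ IsNilpotent (x - e) := by
  letI : CommRing S := { ‹Ring S› with mul_comm := hcomm }
  intro k
  induction k using Nat.strong_induction_on with
  | _ k IH =>
  intro x hx
  rcases k with _ | k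
  · have h1 : (1 : S) = 0 := by simpa using hx
    refine ⟨0, ?_, ⟨1, ?_⟩⟩
    · show (0 : S) * 0 = 0; simp
    · rw [pow_one]
      calc x - 0 = (x - 0) * 1 := (mul_one _).symm
        _ = 0 := by rw [h1, mul_zero]
  rcases k with _ | k
  · have h1 : x - x ^ 2 = 0 := by simpa using hx
    refine ⟨x, ?_, ⟨1, by simp⟩⟩
    show x * x = x
    have h2 := sub_eq_zero.mp h1
    calc x * x = x ^ 2 := (pow_two x).symm
      _ = x := h2.symm
  · have hmlt : (k + 3) / 2 < k + 2 := by omega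
    have hkey : (3*x^2 - 2*x^3) - (3*x^2 - 2*x^3)^2 = (x - x^2)^2 * (3 + 4*(x - x^2)) := by
      ring
    have h2 : ((3*x^2 - 2*x^3) - (3*x^2 - 2*x^3)^2) ^ ((k + 3) / 2) = 0 := by
      rw [hkey, mul_pow, ← pow_mul]
      have hle : k + 2 ≤ 2 * ((k + 3) / 2) := by omega
      obtain ⟨c, hc⟩ := Nat.exists_eq_add_of_le hle
      rw [hc, pow_add, hx, zero_mul, zero_mul]
    obtain ⟨e, he, hen⟩ := IH ((k + 3) / 2) hmlt _ h2
    refine ⟨e, he, ?_⟩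
    have hxy : x - e = (x - x^2)*(1 - 2*x) + ((3*x^2 - 2*x^3) - e) := by ring
    rw [hxy]
    exact (Commute.all _ _).isNilpotent_add
      ((Commute.all _ _).isNilpotent_mul_right ⟨k+2, hx⟩) hen

private lemma comm_main (a : S) (h6 : IsNilpotent (6 : S)) (ha : IsNilpotent (a - a ^ 3)) :
    ∃ e f m : S, IsIdempotentElem e ∧ IsIdempotentElem f ∧ IsNilpotent m ∧ a = e + f + m := by
  letI : CommRing S := { ‹Ring S› with mul_comm := hcomm }
  have nil_add : ∀ {x y : S}, IsNilpotent x → IsNilpotent y → IsNilpotent (x + y) :=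
    fun hx hy => (Commute.all _ _).isNilpotent_add hx hy
  have nil_mul_right : ∀ (x : S) {y : S}, IsNilpotent y → IsNilpotent (x * y) :=
    fun x {y} hy => (Commute.all x y).isNilpotent_mul_left hy
  have lift_idem : ∀ {x : S}, IsNilpotent (x - x ^ 2) →
      ∃ e : S, IsIdempotentElem e ∧ IsNilpotent (x - e) := by
    intro x h
    obtain ⟨k, hk⟩ := h
    exact lift_idem_aux hcomm k x hk
  obtain ⟨k0, hk0⟩ := h6
  have hk : (6 : S) ^ (k0 + 1) = 0 := by rw [pow_succ, hk0, zero_mul]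
  obtain ⟨s, t, hst⟩ : IsCoprime ((2 : ℤ) ^ (k0+1)) ((3 : ℤ) ^ (k0+1)) :=
    IsCoprime.pow (⟨2, -1, by ring⟩ : IsCoprime (2 : ℤ) 3)
  set u : S := ((t * 3 ^ (k0+1) : ℤ) : S) with hu_def
  set v : S := ((s * 2 ^ (k0+1) : ℤ) : S) with hv_def
  have huv1 : u + v = 1 := by
    rw [hu_def, hv_def, ← Int.cast_add, ← Int.cast_one]
    exact congrArg _ (by linarith [hst])
  have huv0 : u * v = 0 := by
    rw [hu_def, hv_def, ← Int.cast_mul]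
    have h1 : (t * 3 ^ (k0+1)) * (s * 2 ^ (k0+1)) = (t * s) * 6 ^ (k0+1) := by
      rw [show (6:ℤ) = 2*3 from by norm_num, mul_pow]; ring
    rw [h1, Int.cast_mul]
    have h2 : ((6 ^ (k0+1) : ℤ) : S) = 0 := by push_cast; exact hk
    rw [h2, mul_zero]
  have hu : u * u = u := by
    have h1 : u * u = u * (u + v) - u * v := by ring
    rw [h1, huv1, mul_one, huv0, sub_zero]
  have hv : v * v = v := by
    have h1 : v * v = v * (u + v) - u * v := by ring
    rw [h1, huv1, mul_one, huv0, sub_zero]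
  have h2u : IsNilpotent (2 * u) := by
    refine ⟨k0 + 1, ?_⟩
    rw [mul_pow, IsIdempotentElem.pow_succ_eq k0 hu, hu_def]
    push_cast
    have h3 : (2:S)^(k0+1) * ((t:S) * (3:S)^(k0+1)) = (t:S) * (6:S)^(k0+1) := by
      rw [show (6:S) = 2*3 from by norm_num, mul_pow]; ring
    rw [h3, hk, mul_zero]
  have h3v : IsNilpotent (3 * v) := by
    refine ⟨k0 + 1, ?_⟩
    rw [mul_pow, IsIdempotentElem.pow_succ_eq k0 hv, hv_def]
    push_cast
    have h3 : (3:S)^(k0+1) * ((s:S) * (2:S)^(k0+1)) = (s:S) * (6:S)^(k0+1) := by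
      rw [show (6:S) = 2*3 from by norm_num, mul_pow]; ring
    rw [h3, hk, mul_zero]
  -- the char-2 part
  have hx3 : IsNilpotent (u * a - (u * a) ^ 3) := by
    have hxe : u * a - (u * a) ^ 3 = u * (a - a ^ 3) := by
      linear_combination (-(a^3)*(u+1)) * hu
    rw [hxe]
    exact (Commute.all _ _).isNilpotent_mul_left ha
  have ht2 : IsNilpotent (u * a - (u * a) ^ 2) := by
    have h4 : (u*a - (u*a)^2)^2 = (u*a) * (u*a - (u*a)^3) + (2*u) * (u * a^3 * (u*a - 1)) := by
      linear_combination ((-2)*u*a^3 + 2*u^2*a^4) * hu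
    have h5 : IsNilpotent ((u * a - (u * a) ^ 2) ^ 2) := by
      rw [h4]
      exact nil_add (nil_mul_right _ hx3) ((Commute.all _ _).isNilpotent_mul_right h2u)
    obtain ⟨c, hc⟩ := h5
    exact ⟨2 * c, by rw [pow_mul, hc]⟩
  obtain ⟨E1, hE1, hE1n⟩ := lift_idem ht2
  -- the char-3 part
  have hy3 : IsNilpotent (v * a - (v * a) ^ 3) := by
    have hye : v * a - (v * a) ^ 3 = v * (a - a ^ 3) := by
      linear_combination (-(a^3)*(v+1)) * hv
    rw [hye]
    exact (Commute.all _ _).isNilpotent_mul_left ha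
  have he2nil : IsNilpotent ((v*a)^2 - ((v*a)^2)^2) := by
    have h4 : (v*a)^2 - ((v*a)^2)^2 = (v*a) * ((v*a) - (v*a)^3) := by ring
    rw [h4]
    exact nil_mul_right _ hy3
  obtain ⟨E2, hE2, hE2n⟩ := lift_idem he2nil
  have hf2nil : IsNilpotent ((v*a - (v*a)^2) - ((v*a) - (v*a)^2)^2) := by
    have h4 : (v*a - (v*a)^2) - ((v*a) - (v*a)^2)^2
        = (3*v)*(a - v*a^2) + ((-2)*((v*a) - (v*a)^3) + (v*a)*((v*a) - (v*a)^3)) := by ring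
    rw [h4]
    exact nil_add ((Commute.all _ _).isNilpotent_mul_right h3v)
      (nil_add (nil_mul_right _ hy3) (nil_mul_right _ hy3))
  obtain ⟨F2, hF2, hF2n⟩ := lift_idem hf2nil
  have hE1' : E1 * E1 = E1 := hE1
  have hE2' : E2 * E2 = E2 := hE2
  have hF2' : F2 * F2 = F2 := hF2
  refine ⟨u*E1 + v*E2, v*F2, a - (u*E1 + v*E2) - v*F2, ?_, ?_, ?_, by ring⟩
  · show (u*E1 + v*E2) * (u*E1 + v*E2) = u*E1 + v*E2
    linear_combination (E1^2)*hu + (E2^2)*hv + u*hE1' + v*hE2' + (2*E1*E2)*huv0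
  · show (v*F2) * (v*F2) = v*F2
    linear_combination (F2^2)*hv + v*hF2'
  · have hmeq : a - (u*E1 + v*E2) - v*F2
        = u*(u*a - E1) + v*(((v*a)^2 - E2) + ((v*a - (v*a)^2) - F2)) := by
      linear_combination (-a)*hu + (-a)*hv + (-a)*huv1
    rw [hmeq]
    exact nil_add (nil_mul_right u hE1n) (nil_mul_right v (nil_add hE2n hF2n))

private lemma comm_six_nil {e f m : S} (he : e * e = e) (hf : f * f = f)
    (hm : IsNilpotent m) (h3 : (3 : S) = e + f + m) : IsNilpotent (6 : S) := by
  letI : CommRing S := { ‹Ring S› with mul_comm := hcomm }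
  have key : (6 : S) = m * (m^2 - 6*m + 11) := by
    linear_combination (2 - 3*m + m^2 - f*m + f^2 - e*m + 2*e*f + e^2) * h3
      + (-2 + 3*f + e) * he + (-2 + f + 3*e) * hf
  rw [key]
  exact (Commute.all _ _).isNilpotent_mul_right hm

private lemma comm_plus {e f m : S} (h6 : IsNilpotent (6 : S)) (he : e * e = e)
    (hf : f * f = f) (hm : IsNilpotent m) :
    IsNilpotent ((e + f + m) - (e + f + m) ^ 3) := by
  letI : CommRing S := { ‹Ring S› with mul_comm := hcomm }
  have key : (e + f + m) - (e + f + m)^3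
      = 6 * (-(e*f)) + m * (1 - 3*(e+f)^2 - 3*(e+f)*m - m^2) := by
    linear_combination ((-1) - 3*f - e) * he + ((-1) - f - 3*e) * hf
  rw [key]
  exact (Commute.all _ _).isNilpotent_add
    ((Commute.all _ _).isNilpotent_mul_right h6)
    ((Commute.all _ _).isNilpotent_mul_right hm)

private lemma comm_mixed {e f m : S} (he : e * e = e) (hf : f * f = f)
    (hm : IsNilpotent m) :
    IsNilpotent ((e - f + m) - (e - f + m) ^ 3) := by
  letI : CommRing S := { ‹Ring S› with mul_comm := hcomm }
  have key : (e - f + m) - (e - f + m)^3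
      = m * (1 - 3*(e-f)^2 - 3*(e-f)*m - m^2) := by
    linear_combination ((-1) + 3*f - e) * he + (1 + f - 3*e) * hf
  rw [key]
  exact (Commute.all _ _).isNilpotent_mul_right hm

end CommPart

section RingPart

variable {R : Type*} [Ring R]

private lemma nil_coe_iff {S' : Subring R} {x : S'} (h : IsNilpotent (x : R)) :
    IsNilpotent x := by
  obtain ⟨k, hk⟩ := h
  exact ⟨k, Subtype.ext (by simp only [SubmonoidClass.coe_pow, ZeroMemClass.coe_zero]; exact hk)⟩

private lemma nil_six_sub (S' : Subring R) (h6 : IsNilpotent (6 : R)) :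
    IsNilpotent (6 : S') := by
  apply nil_coe_iff
  have h : ((6 : S') : R) = (6 : R) := by norm_cast
  rw [h]; exact h6

private lemma nil_of_pow' {x : R} {m : ℕ} (h : IsNilpotent (x ^ m)) : IsNilpotent x := by
  obtain ⟨k, hk⟩ := h
  exact ⟨m * k, by rw [pow_mul, hk]⟩

private lemma subring_closure_comm {s : Set R} (hs : ∀ x ∈ s, ∀ y ∈ s, x * y = y * x) :
    ∀ x y : Subring.closure s, x * y = y * x := fun ⟨_, h₁⟩ ⟨_, h₂⟩ =>
  have h := Subring.closure_le_centralizer_centralizer s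
  Subtype.ext <| Set.centralizer_centralizer_comm_of_comm hs _ (h h₁) _ (h h₂)

private lemma closure3_comm (e f m : R) (hef : Commute e f) (hem : Commute e m)
    (hfm : Commute f m) :
    ∀ x ∈ ({e, f, m} : Set R), ∀ y ∈ ({e, f, m} : Set R), x * y = y * x := by
  rintro x hx y hy
  simp only [Set.mem_insert_iff, Set.mem_singleton_iff] at hx hy
  rcases hx with rfl | rfl | rfl <;> rcases hy with rfl | rfl | rfl <;>
    first
      | rfl
      | exact hef
      | exact hef.symm
      | exact hem
      | exact hem.symm
      | exact hfm
      | exact hfm.symm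

private lemma main_elt (h6 : IsNilpotent (6 : R)) (a : R) (ha : IsNilpotent (a - a ^ 3)) :
    ∃ e f m : R, IsIdempotentElem e ∧ IsIdempotentElem f ∧ IsNilpotent m ∧
      Commute e f ∧ Commute e m ∧ Commute f m ∧ a = e + f + m := by
  have hcomm : ∀ x y : Subring.closure ({a} : Set R), x * y = y * x :=
    subring_closure_comm (by
      rintro x hx y hy
      simp only [Set.mem_singleton_iff] at hx hy
      subst hx; subst hy; rfl)
  have haS : a ∈ Subring.closure ({a} : Set R) := Subring.subset_closure rfl
  set a' : Subring.closure ({a} : Set R) := ⟨a, haS⟩ with ha'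
  have h6' : IsNilpotent (6 : Subring.closure ({a} : Set R)) := nil_six_sub _ h6
  have haa : IsNilpotent (a' - a' ^ 3) := by
    apply nil_coe_iff
    have h : ((a' - a' ^ 3 : _) : R) = a - a ^ 3 := by push_cast; rfl
    rw [h]; exact ha
  obtain ⟨e, f, m, he, hf, hm, heq⟩ := comm_main hcomm a' h6' haa
  refine ⟨e, f, m, ?_, ?_, hm.map (Subring.closure ({a} : Set R)).subtype, ?_, ?_, ?_, ?_⟩
  · show (e : R) * e = e
    have := congrArg Subtype.val (he : e * e = e)
    push_cast at this; exact this
  · show (f : R) * f = f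
    have := congrArg Subtype.val (hf : f * f = f)
    push_cast at this; exact this
  · show (e : R) * f = f * e
    have := congrArg Subtype.val (hcomm e f)
    push_cast at this; exact this
  · show (e : R) * m = m * e
    have := congrArg Subtype.val (hcomm e m)
    push_cast at this; exact this
  · show (f : R) * m = m * f
    have := congrArg Subtype.val (hcomm f m)
    push_cast at this; exact this
  · have := congrArg Subtype.val heq
    push_cast at this
    exact this

section ThreeElts

variable {e f m : R} (he : IsIdempotentElem e) (hf : IsIdempotentElem f)
  (hm : IsNilpotent m) (hef : Commute e f) (hem : Commute e m) (hfm : Commute f m)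

include he hf hm hef hem hfm

private lemma six_nil_of_three (h3 : (3 : R) = e + f + m) : IsNilpotent (6 : R) := by
  have hcomm := subring_closure_comm (closure3_comm e f m hef hem hfm)
  have heS : e ∈ Subring.closure ({e, f, m} : Set R) := Subring.subset_closure (by simp)
  have hfS : f ∈ Subring.closure ({e, f, m} : Set R) := Subring.subset_closure (by simp)
  have hmS : m ∈ Subring.closure ({e, f, m} : Set R) := Subring.subset_closure (by simp)
  have h6S : IsNilpotent (6 : Subring.closure ({e, f, m} : Set R)) := by
    apply comm_six_nil hcomm (e := ⟨e, heS⟩) (f := ⟨f, hfS⟩) (m := ⟨m, hmS⟩)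
    · exact Subtype.ext (by push_cast; exact he)
    · exact Subtype.ext (by push_cast; exact hf)
    · exact nil_coe_iff hm
    · exact Subtype.ext (by push_cast; exact h3)
  have h := h6S.map (Subring.closure ({e, f, m} : Set R)).subtype
  rwa [map_ofNat] at h

private lemma plus_case (h6 : IsNilpotent (6 : R)) :
    IsNilpotent ((e + f + m) - (e + f + m) ^ 3) := by
  have hcomm := subring_closure_comm (closure3_comm e f m hef hem hfm)
  have heS : e ∈ Subring.closure ({e, f, m} : Set R) := Subring.subset_closure (by simp)
  have hfS : f ∈ Subring.closure ({e, f, m} : Set R) := Subring.subset_closure (by simp)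
  have hmS : m ∈ Subring.closure ({e, f, m} : Set R) := Subring.subset_closure (by simp)
  have hS : IsNilpotent (((⟨e, heS⟩ + ⟨f, hfS⟩ + ⟨m, hmS⟩ : _)
      - (⟨e, heS⟩ + ⟨f, hfS⟩ + ⟨m, hmS⟩) ^ 3 : Subring.closure ({e, f, m} : Set R))) := by
    apply comm_plus hcomm (nil_six_sub _ h6)
    · exact Subtype.ext (by push_cast; exact he)
    · exact Subtype.ext (by push_cast; exact hf)
    · exact nil_coe_iff hm
  have h2 := hS.map (Subring.closure ({e, f, m} : Set R)).subtype
  have h3 : ((Subring.closure ({e, f, m} : Set R)).subtype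
      ((⟨e, heS⟩ + ⟨f, hfS⟩ + ⟨m, hmS⟩ : _) - (⟨e, heS⟩ + ⟨f, hfS⟩ + ⟨m, hmS⟩) ^ 3))
      = (e + f + m) - (e + f + m) ^ 3 := by
    push_cast; rfl
  rwa [h3] at h2

private lemma mixed_case : IsNilpotent ((e - f + m) - (e - f + m) ^ 3) := by
  have hcomm := subring_closure_comm (closure3_comm e f m hef hem hfm)
  have heS : e ∈ Subring.closure ({e, f, m} : Set R) := Subring.subset_closure (by simp)
  have hfS : f ∈ Subring.closure ({e, f, m} : Set R) := Subring.subset_closure (by simp)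
  have hmS : m ∈ Subring.closure ({e, f, m} : Set R) := Subring.subset_closure (by simp)
  have hS : IsNilpotent (((⟨e, heS⟩ - ⟨f, hfS⟩ + ⟨m, hmS⟩ : _)
      - (⟨e, heS⟩ - ⟨f, hfS⟩ + ⟨m, hmS⟩) ^ 3 : Subring.closure ({e, f, m} : Set R))) := by
    apply comm_mixed hcomm
    · exact Subtype.ext (by push_cast; exact he)
    · exact Subtype.ext (by push_cast; exact hf)
    · exact nil_coe_iff hm
  have h2 := hS.map (Subring.closure ({e, f, m} : Set R)).subtype
  have h3 : ((Subring.closure ({e, f, m} : Set R)).subtype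
      ((⟨e, heS⟩ - ⟨f, hfS⟩ + ⟨m, hmS⟩ : _) - (⟨e, heS⟩ - ⟨f, hfS⟩ + ⟨m, hmS⟩) ^ 3))
      = (e - f + m) - (e - f + m) ^ 3 := by
    push_cast; rfl
  rwa [h3] at h2

end ThreeElts

end RingPart

section MatrixPart

variable {R : Type*} [Ring R] {n : ℕ}

private lemma mem_upt {M : Matrix (Fin n) (Fin n) R} :
    M ∈ upperTriangularRing R n ↔ ∀ i j : Fin n, j < i → M i j = 0 := Iff.rfl

private def diagHom (i : Fin n) : upperTriangularRing R n →+* R where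
  toFun M := (M : Matrix (Fin n) (Fin n) R) i i
  map_one' := Matrix.one_apply_eq i
  map_zero' := rfl
  map_add' M N := rfl
  map_mul' M N := by
    show ((M : Matrix (Fin n) (Fin n) R) * (N : Matrix (Fin n) (Fin n) R)) i i = _
    rw [Matrix.mul_apply]
    apply Finset.sum_eq_single_of_mem i (Finset.mem_univ i)
    intro k _ hk
    rcases lt_or_gt_of_ne hk with h | h
    · rw [mem_upt.mp M.2 i k h, zero_mul]
    · rw [mem_upt.mp N.2 k i h, mul_zero]

private lemma tri_nil (M : upperTriangularRing R n)
    (h : ∀ i : Fin n, IsNilpotent ((M : Matrix (Fin n) (Fin n) R) i i)) :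
    IsNilpotent M := by
  have hex : ∃ K, ∀ i : Fin n, ((M : Matrix (Fin n) (Fin n) R) i i) ^ K = 0 := by
    choose g hg using h
    refine ⟨Finset.univ.sup g, fun i => ?_⟩
    obtain ⟨c, hc⟩ := Nat.exists_eq_add_of_le (Finset.le_sup (Finset.mem_univ i) (f := g))
    rw [hc, pow_add, hg i, zero_mul]
  obtain ⟨K, hK⟩ := hex
  have hdiag : ∀ (m : ℕ) (i : Fin n),
      ((M ^ m : upperTriangularRing R n) : Matrix (Fin n) (Fin n) R) i i
        = ((M : Matrix (Fin n) (Fin n) R) i i) ^ m := fun m i => map_pow (diagHom i) M m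
  have key : ∀ (a : ℕ) (i j : Fin n), (j : ℕ) < (i : ℕ) + a →
      ((M ^ (a * K) : upperTriangularRing R n) : Matrix (Fin n) (Fin n) R) i j = 0 := by
    intro a
    induction a with
    | zero =>
      intro i j hij
      rw [Nat.zero_mul, pow_zero]
      exact Matrix.one_apply_ne (Fin.ne_of_val_ne (by omega))
    | succ a IH =>
      intro i j hij
      have hsplit : M ^ ((a + 1) * K) = M ^ (a * K) * M ^ K := by
        rw [← pow_add]; congr 1; ring
      rw [hsplit, Subring.coe_mul, Matrix.mul_apply]
      apply Finset.sum_eq_zero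
      intro k _
      rcases lt_or_ge (k : ℕ) ((i : ℕ) + a) with h | h
      · rw [IH i k h, zero_mul]
      · have hjk : (j : ℕ) ≤ (k : ℕ) := by omega
        rcases eq_or_lt_of_le hjk with heq | hlt
        · have hj : j = k := Fin.ext heq
          subst hj
          rw [hdiag K j, hK j, mul_zero]
        · rw [mem_upt.mp (M ^ K).2 k j hlt, mul_zero]
  refine ⟨n * K, ?_⟩
  apply Subtype.ext
  ext i j
  have h0 := key n i j (by have := j.isLt; omega)
  simpa using h0

private lemma dmat_mem (d : Fin n → R) :
    Matrix.diagonal d ∈ upperTriangularRing R n :=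
  fun i j hij => Matrix.diagonal_apply_ne d (ne_of_gt hij)

end MatrixPart

section Final

variable {R : Type*} [Ring R] {n : ℕ}

private lemma idem_map {A B : Type*} [Ring A] [Ring B] (φ : A →+* B) {e : A}
    (he : IsIdempotentElem e) : IsIdempotentElem (φ e) := by
  show φ e * φ e = φ e
  rw [← map_mul, he]

private lemma six_of_24 (h24 : IsNilpotent (24 : R)) : IsNilpotent (6 : R) := by
  apply nil_of_pow' (m := 6)
  have hcomm : Commute ((81 : ℕ) : R) ((24 : R) ^ 2) := Nat.cast_commute 81 _
  have h : IsNilpotent (((81 : ℕ) : R) * (24 : R) ^ 2) :=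
    hcomm.isNilpotent_mul_left (h24.pow_of_pos (by norm_num))
  have heq : (6 : R) ^ 6 = ((81 : ℕ) : R) * (24 : R) ^ 2 := by push_cast; norm_num
  rwa [heq]

private lemma weak_six {e f m : R} (he : IsIdempotentElem e) (hf : IsIdempotentElem f)
    (hm : IsNilpotent m) (hef : Commute e f) (hem : Commute e m) (hfm : Commute f m)
    (hd : (3 : R) = e + f + m ∨ (3 : R) = e - f + m ∨ (3 : R) = -e + f + m) :
    IsNilpotent (6 : R) := by
  rcases hd with h | h | h
  · exact six_nil_of_three he hf hm hef hem hfm h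
  · have h24 : IsNilpotent ((3 : R) - (3 : R) ^ 3) := by
      rw [h]; exact mixed_case he hf hm hef hem hfm
    have heq : (3 : R) - (3 : R) ^ 3 = -(24 : R) := by norm_num
    rw [heq] at h24
    exact six_of_24 (by simpa using h24.neg)
  · have h' : (3 : R) = f - e + m := by rw [h]; abel
    have h24 : IsNilpotent ((3 : R) - (3 : R) ^ 3) := by
      rw [h']; exact mixed_case hf he hm hef.symm hfm hem
    have heq : (3 : R) - (3 : R) ^ 3 = -(24 : R) := by norm_num
    rw [heq] at h24
    exact six_of_24 (by simpa using h24.neg)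

private lemma weak_elt_consequence (h6 : IsNilpotent (6 : R)) {a e f m : R}
    (he : IsIdempotentElem e) (hf : IsIdempotentElem f) (hm : IsNilpotent m)
    (hef : Commute e f) (hem : Commute e m) (hfm : Commute f m)
    (hd : a = e + f + m ∨ a = e - f + m ∨ a = -e + f + m ∨ a = -e - f + m) :
    IsNilpotent (a - a ^ 3) := by
  rcases hd with h | h | h | h
  · rw [h]; exact plus_case he hf hm hef hem hfm h6
  · rw [h]; exact mixed_case he hf hm hef hem hfm
  · have h' : a = f - e + m := by rw [h]; abel
    rw [h']; exact mixed_case hf he hm hef.symm hfm hem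
  · have h' : -a = e + f + (-m) := by rw [h]; abel
    have h2 : a - a ^ 3 = -((-a) - (-a) ^ 3) := by
      have h3 : (-a) ^ 3 = -(a ^ 3) := Odd.neg_pow ⟨1, by norm_num⟩ a
      rw [h3]; abel
    rw [h2]
    apply IsNilpotent.neg
    rw [h']
    exact plus_case he hf hm.neg hef hem.neg_right hfm.neg_right h6

private lemma T_s2nc (h6 : IsNilpotent (6 : R)) (hch : ∀ a : R, IsNilpotent (a - a ^ 3)) :
    IsStrongly2NilClean (upperTriangularRing R n) := by
  intro A
  apply main_elt
  · apply tri_nil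
    intro i
    have h : ((6 : upperTriangularRing R n) : Matrix (Fin n) (Fin n) R) i i
        = diagHom i (6 : upperTriangularRing R n) := rfl
    rw [h, map_ofNat]
    exact h6
  · apply tri_nil
    intro i
    have h : ((A - A ^ 3 : upperTriangularRing R n) : Matrix (Fin n) (Fin n) R) i i
        = diagHom i A - (diagHom i A) ^ 3 := by
      show diagHom i (A - A ^ 3) = _
      rw [map_sub (diagHom i) A (A ^ 3), map_pow (diagHom i) A 3]
    rw [h]
    exact hch _

private lemma forward (hn : 2 ≤ n)
    (hT : IsWeaklyStrongly2NilClean (upperTriangularRing R n)) :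
    IsNilpotent (6 : R) ∧ ∀ a : R, IsNilpotent (a - a ^ 3) := by
  have h6 : IsNilpotent (6 : R) := by
    set d3 : Fin n → R := fun k => if (k : ℕ) = 0 then 3 else if (k : ℕ) = 1 then -3 else 0
      with hd3
    set B : upperTriangularRing R n := ⟨Matrix.diagonal d3, dmat_mem d3⟩ with hB
    obtain ⟨E, F, N, hE, hF, hN, hEF, hEN, hFN, hd⟩ := hT B
    have hproj0 : diagHom (⟨0, by omega⟩ : Fin n) B = (3 : R) := by
      show Matrix.diagonal d3 ⟨0, by omega⟩ ⟨0, by omega⟩ = 3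
      rw [Matrix.diagonal_apply_eq]
      simp [hd3]
    have hproj1 : diagHom (⟨1, by omega⟩ : Fin n) B = (-3 : R) := by
      show Matrix.diagonal d3 ⟨1, by omega⟩ ⟨1, by omega⟩ = -3
      rw [Matrix.diagonal_apply_eq]
      simp [hd3]
    set φ0 : upperTriangularRing R n →+* R := diagHom ⟨0, by omega⟩ with hφ0
    set φ1 : upperTriangularRing R n →+* R := diagHom ⟨1, by omega⟩ with hφ1
    rcases hd with h | h | h | h
    · refine weak_six (idem_map φ0 hE) (idem_map φ0 hF) (hN.map φ0) (hEF.map φ0) (hEN.map φ0)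
        (hFN.map φ0) (Or.inl ?_)
      rw [← hproj0, h]; simp only [map_add]
    · refine weak_six (idem_map φ0 hE) (idem_map φ0 hF) (hN.map φ0) (hEF.map φ0) (hEN.map φ0)
        (hFN.map φ0) (Or.inr (Or.inl ?_))
      rw [← hproj0, h]; simp only [map_add, map_sub]
    · refine weak_six (idem_map φ0 hE) (idem_map φ0 hF) (hN.map φ0) (hEF.map φ0) (hEN.map φ0)
        (hFN.map φ0) (Or.inr (Or.inr ?_))
      rw [← hproj0, h]; simp only [map_add, map_neg]
    · -- use the second diagonal entry
      have hp : (-3 : R) = -(φ1 E) - φ1 F + φ1 N := by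
        rw [← hproj1, h]; simp only [map_add, map_sub, map_neg]
      have h3 : (3 : R) = φ1 E + φ1 F + (-(φ1 N)) := by
        have h4 : (3 : R) = -(-(φ1 E) - φ1 F + φ1 N) := by rw [← hp]; norm_num
        rw [h4]; abel
      exact six_nil_of_three (idem_map φ1 hE) (idem_map φ1 hF) (hN.map φ1).neg (hEF.map φ1)
        (hEN.map φ1).neg_right (hFN.map φ1).neg_right h3
  refine ⟨h6, fun a => ?_⟩
  set da : Fin n → R := fun k => if (k : ℕ) = 0 then a else 0 with hda
  set A : upperTriangularRing R n := ⟨Matrix.diagonal da, dmat_mem da⟩ with hA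
  obtain ⟨E, F, N, hE, hF, hN, hEF, hEN, hFN, hd⟩ := hT A
  have hproj : diagHom (⟨0, by omega⟩ : Fin n) A = a := by
    show Matrix.diagonal da ⟨0, by omega⟩ ⟨0, by omega⟩ = a
    rw [Matrix.diagonal_apply_eq]
    simp [hda]
  set φ0 : upperTriangularRing R n →+* R := diagHom ⟨0, by omega⟩ with hφ0
  refine weak_elt_consequence h6 (idem_map φ0 hE) (idem_map φ0 hF) (hN.map φ0) (hEF.map φ0)
    (hEN.map φ0) (hFN.map φ0) ?_
  rcases hd with h | h | h | h
  · exact Or.inl (by rw [← hproj, h]; simp only [map_add])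
  · exact Or.inr (Or.inl (by rw [← hproj, h]; simp only [map_add, map_sub]))
  · exact Or.inr (Or.inr (Or.inl (by rw [← hproj, h]; simp only [map_add, map_neg])))
  · exact Or.inr (Or.inr (Or.inr (by rw [← hproj, h]; simp only [map_add, map_sub, map_neg])))

end Final


theorem upperTriangular_wsnc_iff {R : Type*} [Ring R] (n : ℕ) (hn : 2 ≤ n) :
    (IsWeaklyStrongly2NilClean (upperTriangularRing R n) ↔ IsStrongly2NilClean R) ∧
    (IsWeaklyStrongly2NilClean (upperTriangularRing R n) →
      IsStrongly2NilClean (upperTriangularRing R n)) := by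
  constructor
  · constructor
    · intro hT
      obtain ⟨h6, hch⟩ := forward hn hT
      exact fun a => main_elt h6 a (hch a)
    · intro hR
      have h6 : IsNilpotent (6 : R) := by
        obtain ⟨e, f, m, he, hf, hm, hef, hem, hfm, heq⟩ := hR 3
        exact six_nil_of_three he hf hm hef hem hfm heq
      have hch : ∀ a : R, IsNilpotent (a - a ^ 3) := by
        intro a
        obtain ⟨e, f, m, he, hf, hm, hef, hem, hfm, heq⟩ := hR a
        rw [heq]
        exact plus_case he hf hm hef hem hfm h6
      intro A
      obtain ⟨e, f, m, p1, p2, p3, p4, p5, p6, p7⟩ := T_s2nc h6 hch A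
      exact ⟨e, f, m, p1, p2, p3, p4, p5, p6, Or.inl p7⟩
  · intro hT
    obtain ⟨h6, hch⟩ := forward hn hT
    exact T_s2nc h6 hch
end

section
/- If R is a weakly strongly 2-nil-clean ring and e is a nonzero idempotent of R, then the corner ring eRe is also weakly strongly 2-nil-clean. -/
open Polynomial

section CornerAux
variable {R : Type*} [Ring R]

lemma aeval_img_comm (a : R) (p q : ℤ[X]) : Commute (aeval a p) (aeval a q) := by
  unfold Commute SemiconjBy
  rw [← map_mul, ← map_mul, mul_comm]

lemma nilp_of_sq {y : R} (h : IsNilpotent (y^2)) : IsNilpotent y := by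
  obtain ⟨j, hj⟩ := h
  exact ⟨2*j, by rw [pow_mul, hj]⟩

lemma comm_aeval (u m : R) (h : Commute u m) (q : ℤ[X]) : Commute (aeval u q) m := by
  induction q using Polynomial.induction_on with
  | C c => simp
  | add p q hp hq => simpa using hp.add_left hq
  | monomial i c hc =>
      have : (C c * X ^ (i + 1) : ℤ[X]) = (C c * X ^ i) * X := by ring
      rw [this, map_mul, aeval_X]
      exact hc.mul_left h

noncomputable def pairHom (u m : R) (h : Commute u m) : ℤ[X][X] →ₐ[ℤ] R :=
  eval₂AlgHom (aeval u) m (fun q => comm_aeval u m h q)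

lemma pairHom_CX (u m : R) (h : Commute u m) : pairHom u m h (C X) = u := by
  simp [pairHom]

lemma pairHom_X (u m : R) (h : Commute u m) : pairHom u m h X = m := by
  simp [pairHom]

lemma idem_sum_cubic (f g : R) (hf : f * f = f) (hg : g * g = g) (hc : Commute f g) :
    aeval (f + g) ((X : ℤ[X])^3 - 3*X^2 + 2*X) = 0 := by
  have e1 : aeval (f + g) ((X : ℤ[X])^3 - 3*X^2 + 2*X)
      = pairHom f g hc (aeval (C X + X) ((X : ℤ[X])^3 - 3*X^2 + 2*X)) := by
    rw [← aeval_algHom_apply]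
    congr 1
    rw [map_add, pairHom_CX, pairHom_X]
  have e2 : aeval (C X + X) ((X : ℤ[X])^3 - 3*X^2 + 2*X)
      = ((C X * C X - C X) * (C X + 3*X - 2) + (X*X - X) * (3 * C X + X - 2) : ℤ[X][X]) := by
    simp only [map_sub, map_add, map_mul, map_pow, aeval_X, map_ofNat]
    ring
  rw [e1, e2]
  simp only [map_add, map_mul, map_sub, pairHom_CX, pairHom_X, hf, hg]
  simp

lemma idem_sub_cubic (f g : R) (hf : f * f = f) (hg : g * g = g) (hc : Commute f g) :
    aeval (f - g) ((X : ℤ[X])^3 - X) = 0 := by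
  have e1 : aeval (f - g) ((X : ℤ[X])^3 - X)
      = pairHom f g hc (aeval (C X - X) ((X : ℤ[X])^3 - X)) := by
    rw [← aeval_algHom_apply]
    congr 1
    rw [map_sub, pairHom_CX, pairHom_X]
  have e2 : aeval (C X - X) ((X : ℤ[X])^3 - X)
      = ((C X * C X - C X) * (C X - 3*X + 1) + (X*X - X) * (3 * C X - X - 1) : ℤ[X][X]) := by
    simp only [map_sub, map_add, map_mul, map_pow, aeval_X, map_ofNat]
    ring
  rw [e1, e2]
  simp only [map_add, map_mul, map_sub, pairHom_CX, pairHom_X, hf, hg]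
  simp

lemma lift_idem : ∀ (m : ℕ) {R : Type*} [Ring R] (x : R), (x^2 - x)^m = 0 →
    ∃ p : ℤ[X], p.coeff 0 = 0 ∧ (aeval x p) * (aeval x p) = aeval x p ∧
      IsNilpotent (aeval x p - x) := by
  intro m
  induction m using Nat.strong_induction_on with
  | _ m IH =>
    rcases m with _ | m
    · intro R _ x h
      rw [pow_zero] at h
      have h0 : ∀ z : R, z = 0 := fun z => by rw [← mul_one z, h, mul_zero]
      exact ⟨X, coeff_X_zero, by rw [aeval_X, h0 (x*x), h0 x],
        ⟨1, by rw [pow_one]; exact h0 _⟩⟩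
    rcases m with _ | m
    · intro R _ x h
      rw [pow_one, sub_eq_zero] at h
      refine ⟨X, coeff_X_zero, ?_, by rw [aeval_X, sub_self]; exact ⟨1, by rw [pow_one]⟩⟩
      rw [aeval_X, ← sq]
      exact h
    · intro R _ x h
      have hlt : (m + 3) / 2 < m + 2 := by omega
      have h2mq : m + 2 ≤ 2 * ((m + 3) / 2) := by omega
      obtain ⟨Py, hPy⟩ : ∃ q : ℤ[X], q = 3 * X^2 - 2 * X^3 := ⟨_, rfl⟩
      have hyx : aeval x Py = 3*x^2 - 2*x^3 := by
        rw [hPy]; simp [map_ofNat]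
      have hdef : (aeval x Py)^2 - aeval x Py = (x^2 - x)^2 * (4*x^2 - 4*x - 3) := by
        rw [hyx]; noncomm_ring
      have hcsq : Commute ((x^2-x)^2) (4*x^2 - 4*x - 3 : R) := by
        have h1 : ((x:R)^2-x)^2 = aeval x (((X:ℤ[X])^2-X)^2) := by simp [map_ofNat]
        have h2 : (4*x^2-4*x-3 : R) = aeval x (4*(X:ℤ[X])^2 - 4*X - 3) := by simp [map_ofNat]
        rw [h1, h2]; exact aeval_img_comm x _ _
      have hnil_y : ((aeval x Py)^2 - aeval x Py)^((m+3)/2) = 0 := by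
        rw [hdef, hcsq.mul_pow, ← pow_mul]
        have hz : (x^2-x)^(2*((m+3)/2)) = 0 := by
          have he : 2*((m+3)/2) = (m+2) + (2*((m+3)/2) - (m+2)) := by omega
          rw [he, pow_add, h, zero_mul]
        rw [hz, zero_mul]
      obtain ⟨p', hp0', hid', hnil'⟩ := IH ((m+3)/2) hlt (aeval x Py) hnil_y
      refine ⟨p'.comp Py, ?_, ?_, ?_⟩
      · rw [coeff_zero_eq_eval_zero, eval_comp]
        have h0 : Py.eval 0 = 0 := by rw [hPy]; simp
        rw [h0, ← coeff_zero_eq_eval_zero, hp0']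
      · rw [aeval_comp]; exact hid'
      · rw [aeval_comp, ← sub_add_sub_cancel _ (aeval x Py) x]
        have hcomm2 : Commute (aeval (aeval x Py) p' - aeval x Py) (aeval x Py - x) := by
          have e1 : aeval (aeval x Py) p' - aeval x Py = aeval x (p'.comp Py - Py) := by
            rw [map_sub, aeval_comp]
          have e2 : aeval x Py - x = aeval x (Py - X) := by rw [map_sub, aeval_X]
          rw [e1, e2]; exact aeval_img_comm x _ _
        refine hcomm2.isNilpotent_add hnil' ?_
        have e3 : aeval x Py - x = (x^2 - x) * (1 - 2*x) := by rw [hyx]; noncomm_ring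
        rw [e3]
        have hcomm3 : Commute ((x:R)^2 - x) (1 - 2*x) := by
          have h1 : ((x:R)^2-x) = aeval x ((X:ℤ[X])^2-X) := by simp
          have h2 : (1 - 2*x : R) = aeval x (1 - 2*(X:ℤ[X])) := by simp [map_ofNat]
          rw [h1, h2]; exact aeval_img_comm x _ _
        exact hcomm3.isNilpotent_mul_right ⟨m+2, h⟩

lemma descent (y : R) (r : ℤ) (hky : ((2*r+1 : ℤ) : R) * y = 0)
    (h4 : IsNilpotent (((4 : ℤ) : R) * y)) : IsNilpotent y := by
  have h1 : ((2*r+1:ℤ):R) = ((2*r:ℤ):R) + 1 := by push_cast; ring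
  have h2 : ((2*r:ℤ):R) * y + y = 0 := by
    have h' := hky
    rw [h1, add_mul, one_mul] at h'
    exact h'
  have hy : y = ((-2*r : ℤ) : R) * y := by
    have h3 : y = -(((2*r:ℤ):R) * y) := eq_neg_of_add_eq_zero_right h2
    rw [show (-2*r : ℤ) = -(2*r) from by ring, Int.cast_neg, neg_mul]
    exact h3
  have hy2 : y = ((4*r^2 : ℤ):R) * y := by
    calc y = ((-2*r:ℤ):R) * y := hy
      _ = ((-2*r:ℤ):R) * (((-2*r:ℤ):R) * y) := congrArg (fun z => ((-2*r:ℤ):R) * z) hy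
      _ = ((4*r^2:ℤ):R) * y := by
          rw [← mul_assoc, ← Int.cast_mul, show (-2*r)*(-2*r) = 4*r^2 from by ring]
  obtain ⟨j, hj⟩ := h4
  refine ⟨j+1, ?_⟩
  have hj1 : (((4:ℤ):R) * y)^(j+1) = 0 := by rw [pow_succ, hj, zero_mul]
  have hcy : y^(j+1) = ((4*r^2:ℤ):R)^(j+1) * y^(j+1) := by
    conv_lhs => rw [hy2]
    rw [(Int.cast_commute (4*r^2 : ℤ) y).mul_pow]
  rw [hcy]
  have hexp : ((4*r^2:ℤ):R)^(j+1) = ((r^2:ℤ):R)^(j+1) * ((4:ℤ):R)^(j+1) := by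
    rw [← Int.cast_pow, ← Int.cast_pow, ← Int.cast_pow, ← Int.cast_mul]
    congr 1
    ring
  rw [hexp, mul_assoc, ← (Int.cast_commute (4:ℤ) y).mul_pow, hj1, mul_zero]

lemma L4 (u m x : R) (hum : Commute u m) (hm : IsNilpotent m) (hx : x = u + m)
    (P : ℤ[X]) (hu : aeval u P = 0) : IsNilpotent (aeval x P) := by
  set φ := pairHom u m hum with hφ
  have hdvd : (X : ℤ[X][X]) ∣ (aeval (C X + X) P - aeval (C X) P) := by
    have key := Polynomial.sub_dvd_eval_sub (C X + X) (C X) (P.map (algebraMap ℤ ℤ[X][X]))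
    rw [add_sub_cancel_left] at key
    rw [Polynomial.aeval_def, Polynomial.aeval_def, Polynomial.eval₂_eq_eval_map,
      Polynomial.eval₂_eq_eval_map]
    exact key
  obtain ⟨V, hV⟩ := hdvd
  have hsplit : aeval (C X + X) P = aeval (C X) P + X * V := by
    rw [← hV]; ring
  have h1 : aeval x P = φ (aeval (C X + X) P) := by
    rw [← aeval_algHom_apply, map_add, pairHom_CX, pairHom_X, hx]
  have h2 : φ (aeval (C X) P) = 0 := by
    rw [← aeval_algHom_apply, pairHom_CX, hu]
  have h3 : aeval x P = m * φ V := by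
    rw [h1, hsplit, map_add, h2, zero_add, map_mul, pairHom_X]
  rw [h3]
  have hcomm : Commute m (φ V) := by
    have : Commute (φ X) (φ V) := by
      unfold Commute SemiconjBy
      rw [← map_mul, ← map_mul, mul_comm]
    rwa [pairHom_X] at this
  exact hcomm.isNilpotent_mul_right hm

lemma kill_aeval (a : R) (c : ℤ) (hc : ((c : ℤ) : R) = 0) (P : ℤ[X]) :
    aeval a ((c : ℤ[X]) * P) = 0 := by
  rw [map_mul, map_intCast, hc, zero_mul]

lemma nilHelper (a : R) (γ r : ℤ) (hγ2 : ((γ^2-γ : ℤ):R) = 0)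
    (hdγ : (((2*r+1)*γ : ℤ):R) = 0)
    (Pq H Wg cof W2 W3 : ℤ[X]) (hq : IsNilpotent (aeval a Pq))
    (hI : ((4:ℤ):ℤ[X]) * (H^2 - H)
        = Pq * cof + ((γ^2-γ : ℤ):ℤ[X]) * W2 + (((2*r+1)*γ : ℤ):ℤ[X]) * W3)
    (hform : H^2 - H = ((γ : ℤ):ℤ[X]) * Wg) :
    IsNilpotent ((aeval a H)^2 - aeval a H) := by
  have h4 : ((4:ℤ):R) * aeval a (H^2 - H) = aeval a Pq * aeval a cof := by
    have hthis := congrArg (aeval a) hI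
    rw [map_mul, map_intCast, map_add, map_add, map_mul,
      kill_aeval a _ hγ2, kill_aeval a _ hdγ, add_zero, add_zero] at hthis
    exact hthis
  have hnil4 : IsNilpotent (((4:ℤ):R) * aeval a (H^2-H)) := by
    rw [h4]; exact (aeval_img_comm a _ _).isNilpotent_mul_right hq
  have hkill : ((2*r+1 : ℤ):R) * aeval a (H^2 - H) = 0 := by
    have e : ((2*r+1 : ℤ):ℤ[X]) * (H^2 - H) = (((2*r+1)*γ : ℤ):ℤ[X]) * Wg := by
      rw [hform]; push_cast; ring
    have hthis := congrArg (aeval a) e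
    rw [map_mul, map_intCast, kill_aeval a _ hdγ] at hthis
    exact hthis
  have hres := descent (aeval a (H^2 - H)) r hkill hnil4
  rwa [map_sub, map_pow] at hres

lemma corner_aeval (e a : R) (hea : e*a = a) (hae : a*e = a) (P : ℤ[X]) (hP : P.coeff 0 = 0) :
    aeval a P = e * aeval a P * e := by
  obtain ⟨Q, hQ⟩ := Polynomial.X_dvd_iff.mpr hP
  have h1 : aeval a P = a * aeval a Q := by rw [hQ, map_mul, aeval_X]
  have h2 : aeval a P = aeval a Q * a := by rw [hQ, mul_comm X Q, map_mul, aeval_X]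
  have h3 : e * aeval a P = aeval a P := by rw [h1, ← mul_assoc, hea]
  have h4 : aeval a P * e = aeval a P := by rw [h2, mul_assoc, hae]
  rw [h3, h4]

lemma mainA (e a : R) (hea : e * a = a) (hae : a * e = a)
    (γ δ r : ℤ) (hsum : γ + δ = 1)
    (hγ2 : ((γ^2 - γ : ℤ) : R) = 0) (hδ2 : ((δ^2 - δ : ℤ) : R) = 0)
    (hγδ : ((γ * δ : ℤ) : R) = 0) (hdγ : (((2*r+1) * γ : ℤ) : R) = 0)
    (k : ℕ) (hk : 1 ≤ k) (h2δ : ((2^k * δ : ℤ) : R) = 0)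
    (hq : IsNilpotent (aeval a ((X : ℤ[X])^3 - 3*X^2 + 2*X))) :
    ∃ f g n : R, f = e*f*e ∧ g = e*g*e ∧ n = e*n*e ∧ f*f = f ∧ g*g = g ∧
      IsNilpotent n ∧ Commute f g ∧ Commute f n ∧ Commute g n ∧ a = f + g + n := by
  obtain ⟨PB1, hPB1⟩ : ∃ q : ℤ[X], q = (γ : ℤ[X]) * X := ⟨_, rfl⟩
  obtain ⟨PB2, hPB2⟩ : ∃ q : ℤ[X], q = (δ : ℤ[X]) * X := ⟨_, rfl⟩
  obtain ⟨PH1, hPH1⟩ : ∃ q : ℤ[X], q = ((-r : ℤ) : ℤ[X]) * (3*PB1 - PB1^2) := ⟨_, rfl⟩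
  obtain ⟨PH2, hPH2⟩ : ∃ q : ℤ[X], q = ((-r : ℤ) : ℤ[X]) * (PB1^2 - PB1) := ⟨_, rfl⟩
  -- Z-type nilpotency
  have Znil : ∀ G : ℤ[X], IsNilpotent (aeval a (((2*δ : ℤ) : ℤ[X]) * G)) := by
    intro G
    obtain ⟨k', rfl⟩ : ∃ k', k = k' + 1 := ⟨k - 1, by omega⟩
    refine ⟨k' + 1, ?_⟩
    rw [← map_pow]
    have hh : (((2*δ:ℤ):ℤ[X]) * G)^(k'+1)
        = ((2^(k'+1)*δ : ℤ):ℤ[X]) * (((δ^k' : ℤ):ℤ[X]) * G^(k'+1)) := by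
      push_cast; ring
    rw [hh, map_mul, map_intCast, h2δ, zero_mul]
  -- (i) PH1
  have hx1 : IsNilpotent ((aeval a PH1)^2 - aeval a PH1) := by
    refine nilHelper a γ r hγ2 hdγ ((X : ℤ[X])^3 - 3*X^2 + 2*X) PH1
      ((γ:ℤ[X]) * (((-r:ℤ):ℤ[X])*(3*X - (γ:ℤ[X])*X^2))^2 - ((-r:ℤ):ℤ[X])*(3*X - (γ:ℤ[X])*X^2))
      ((γ:ℤ[X]) * (X - 3))
      (4*(γ:ℤ[X])^2*((r:ℤ):ℤ[X])^2*X^4 + 4*(γ:ℤ[X])*((r:ℤ):ℤ[X])^2*X^4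
        - 24*(γ:ℤ[X])*((r:ℤ):ℤ[X])^2*X^3 + 4*((r:ℤ):ℤ[X])^2*X^4
        - 24*((r:ℤ):ℤ[X])^2*X^3 + 36*((r:ℤ):ℤ[X])^2*X^2 - 4*((r:ℤ):ℤ[X])*X^2)
      (2*((r:ℤ):ℤ[X])*X^4 - 12*((r:ℤ):ℤ[X])*X^3 + 18*((r:ℤ):ℤ[X])*X^2
        - X^4 + 6*X^3 - 11*X^2 + 6*X)
      hq ?_ ?_
    · rw [hPH1, hPB1]; push_cast; ring
    · rw [hPH1, hPB1]; push_cast; ring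
  -- (ii) PH2
  have hx2 : IsNilpotent ((aeval a PH2)^2 - aeval a PH2) := by
    refine nilHelper a γ r hγ2 hdγ ((X : ℤ[X])^3 - 3*X^2 + 2*X) PH2
      ((γ:ℤ[X]) * (((-r:ℤ):ℤ[X])*((γ:ℤ[X])*X^2 - X))^2 - ((-r:ℤ):ℤ[X])*((γ:ℤ[X])*X^2 - X))
      ((γ:ℤ[X]) * (X + 1))
      (4*(γ:ℤ[X])^2*((r:ℤ):ℤ[X])^2*X^4 + 4*(γ:ℤ[X])*((r:ℤ):ℤ[X])^2*X^4
        - 8*(γ:ℤ[X])*((r:ℤ):ℤ[X])^2*X^3 + 4*((r:ℤ):ℤ[X])^2*X^4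
        - 8*((r:ℤ):ℤ[X])^2*X^3 + 4*((r:ℤ):ℤ[X])^2*X^2 + 4*((r:ℤ):ℤ[X])*X^2)
      (2*((r:ℤ):ℤ[X])*X^4 - 4*((r:ℤ):ℤ[X])*X^3 + 2*((r:ℤ):ℤ[X])*X^2
        - X^4 + 2*X^3 + X^2 - 2*X)
      hq ?_ ?_
    · rw [hPH2, hPB1]; push_cast; ring
    · rw [hPH2, hPB1]; push_cast; ring
  -- (iii) PB2
  have hstep1 : IsNilpotent (aeval a ((PB2^2 - PB2) * PB2)) := by
    have hI5 : (PB2^2 - PB2) * PB2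
        = ((δ^3 : ℤ):ℤ[X]) * ((X : ℤ[X])^3 - 3*X^2 + 2*X)
          + ((2*δ : ℤ):ℤ[X]) * ((δ:ℤ[X])*X^2 - X)
          + ((δ^2-δ : ℤ):ℤ[X]) * (3*(δ:ℤ[X])*X^2 - 2*(δ:ℤ[X])*X - 2*X) := by
      rw [hPB2]; push_cast; ring
    have hthis := congrArg (aeval a) hI5
    rw [map_add, map_add, kill_aeval a _ hδ2, add_zero] at hthis
    rw [hthis]
    refine (aeval_img_comm a _ _).isNilpotent_add ?_ (Znil _)
    rw [map_mul, map_intCast]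
    exact (Int.cast_commute _ _).isNilpotent_mul_left hq
  have hXsq : IsNilpotent ((aeval a (PB2^2 - PB2))^2) := by
    have hI6 : (PB2^2-PB2)^2 = ((PB2^2-PB2)*PB2) * (PB2 - (δ:ℤ[X]))
        + ((δ^2-δ : ℤ):ℤ[X]) * ((δ:ℤ[X])^2*X^3 - (δ:ℤ[X])*X^2) := by
      rw [hPB2]; push_cast; ring
    have hthis := congrArg (aeval a) hI6
    rw [map_add, kill_aeval a _ hδ2, add_zero, map_mul, map_pow] at hthis
    rw [hthis]
    exact (aeval_img_comm a _ _).isNilpotent_mul_right hstep1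
  have hx3 : IsNilpotent ((aeval a PB2)^2 - aeval a PB2) := by
    have := nilp_of_sq hXsq
    rwa [map_sub, map_pow] at this
  -- lifts
  obtain ⟨m1, hm1⟩ := hx1
  obtain ⟨p1, hp10, hid1, hdef1⟩ := lift_idem m1 (aeval a PH1) hm1
  obtain ⟨m2, hm2⟩ := hx2
  obtain ⟨p2, hp20, hid2, hdef2⟩ := lift_idem m2 (aeval a PH2) hm2
  obtain ⟨m3, hm3⟩ := hx3
  obtain ⟨p3, hp30, hid3, hdef3⟩ := lift_idem m3 (aeval a PB2) hm3
  rw [← aeval_comp] at hid1 hdef1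
  rw [← aeval_comp] at hid2 hdef2
  rw [← aeval_comp] at hid3 hdef3
  -- coefficient facts
  have hc1 : (p1.comp PH1).coeff 0 = 0 := by
    rw [coeff_zero_eq_eval_zero, eval_comp]
    have h0 : PH1.eval 0 = 0 := by rw [hPH1, hPB1]; simp
    rw [h0, ← coeff_zero_eq_eval_zero, hp10]
  have hc2 : (p2.comp PH2).coeff 0 = 0 := by
    rw [coeff_zero_eq_eval_zero, eval_comp]
    have h0 : PH2.eval 0 = 0 := by rw [hPH2, hPB1]; simp
    rw [h0, ← coeff_zero_eq_eval_zero, hp20]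
  have hc3 : (p3.comp PB2).coeff 0 = 0 := by
    rw [coeff_zero_eq_eval_zero, eval_comp]
    have h0 : PB2.eval 0 = 0 := by rw [hPB2]; simp
    rw [h0, ← coeff_zero_eq_eval_zero, hp30]
  -- orthogonality
  obtain ⟨Q1, hQ1⟩ := Polynomial.X_dvd_iff.mpr hp10
  obtain ⟨Q3, hQ3⟩ := Polynomial.X_dvd_iff.mpr hp30
  have e1 : p1.comp PH1 = PH1 * (Q1.comp PH1) := by rw [hQ1, mul_comp, X_comp]
  have e3 : p3.comp PB2 = PB2 * (Q3.comp PB2) := by rw [hQ3, mul_comp, X_comp]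
  have hzero : aeval a ((p1.comp PH1) * (p3.comp PB2)) = 0 := by
    have eform : (p1.comp PH1) * (p3.comp PB2)
        = ((γ*δ : ℤ):ℤ[X]) * ((((-r:ℤ):ℤ[X])*(3*X - (γ:ℤ[X])*X^2)) * (Q1.comp PH1)
            * (X * (Q3.comp PB2))) := by
      rw [e1, e3, hPH1, hPB1, hPB2]; push_cast; ring
    rw [eform]; exact kill_aeval a _ hγδ _
  have h12 : aeval a (p1.comp PH1) * aeval a (p3.comp PB2) = 0 := by
    rw [← map_mul]; exact hzero
  have h21 : aeval a (p3.comp PB2) * aeval a (p1.comp PH1) = 0 := by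
    rw [← map_mul, mul_comm]; exact hzero
  -- the sum relation
  have hbsum : aeval a (PH1 + PH2 + PB2 - X) = 0 := by
    have e : PH1 + PH2 + PB2 - X
        = ((-((2*r+1)*γ) : ℤ):ℤ[X]) * X + ((γ+δ-1 : ℤ):ℤ[X]) * X := by
      rw [hPH1, hPH2, hPB1, hPB2]; push_cast; ring
    rw [e, map_add, kill_aeval a _ (by rw [Int.cast_neg, hdγ, neg_zero]) _,
      kill_aeval a _ (by rw [show γ+δ-1 = 0 from by omega, Int.cast_zero]) _, add_zero]
  -- assemble
  refine ⟨aeval a (p1.comp PH1 + p3.comp PB2), aeval a (p2.comp PH2),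
    aeval a (X - (p1.comp PH1 + p3.comp PB2) - p2.comp PH2), ?_, ?_, ?_, ?_, ?_, ?_, ?_, ?_, ?_, ?_⟩
  · refine corner_aeval e a hea hae _ ?_
    rw [coeff_add, hc1, hc3, add_zero]
  · exact corner_aeval e a hea hae _ hc2
  · refine corner_aeval e a hea hae _ ?_
    rw [coeff_sub, coeff_sub, coeff_X_zero, coeff_add, hc1, hc3, hc2]
    ring
  · rw [map_add, add_mul, mul_add, mul_add, hid1, hid3, h12, h21, add_zero, zero_add]
  · exact hid2
  · -- nilpotency of n
    have hNsplit : (X : ℤ[X]) - (p1.comp PH1 + p3.comp PB2) - p2.comp PH2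
        = ((PH1 - p1.comp PH1) + (PH2 - p2.comp PH2) + (PB2 - p3.comp PB2))
          - (PH1 + PH2 + PB2 - X) := by ring
    rw [hNsplit, map_sub, hbsum, sub_zero, map_add, map_add]
    have hn1 : IsNilpotent (aeval a (PH1 - p1.comp PH1)) := by
      rw [map_sub, ← neg_sub]
      exact hdef1.neg
    have hn2 : IsNilpotent (aeval a (PH2 - p2.comp PH2)) := by
      rw [map_sub, ← neg_sub]
      exact hdef2.neg
    have hn3 : IsNilpotent (aeval a (PB2 - p3.comp PB2)) := by
      rw [map_sub, ← neg_sub]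
      exact hdef3.neg
    exact (Commute.add_left (aeval_img_comm a _ _) (aeval_img_comm a _ _)).isNilpotent_add
      ((aeval_img_comm a _ _).isNilpotent_add hn1 hn2) hn3
  · exact aeval_img_comm a _ _
  · exact aeval_img_comm a _ _
  · exact aeval_img_comm a _ _
  · rw [map_sub, map_sub, aeval_X]
    abel

lemma mainB (e a : R) (hea : e * a = a) (hae : a * e = a)
    (γ δ r : ℤ) (hsum : γ + δ = 1)
    (hγ2 : ((γ^2 - γ : ℤ) : R) = 0) (hδ2 : ((δ^2 - δ : ℤ) : R) = 0)
    (hγδ : ((γ * δ : ℤ) : R) = 0) (hdγ : (((2*r+1) * γ : ℤ) : R) = 0)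
    (k : ℕ) (hk : 1 ≤ k) (h2δ : ((2^k * δ : ℤ) : R) = 0)
    (hq : IsNilpotent (aeval a ((X : ℤ[X])^3 - X))) :
    ∃ f g n : R, f = e*f*e ∧ g = e*g*e ∧ n = e*n*e ∧ f*f = f ∧ g*g = g ∧
      IsNilpotent n ∧ Commute f g ∧ Commute f n ∧ Commute g n ∧ a = f - g + n := by
  obtain ⟨PB1, hPB1⟩ : ∃ q : ℤ[X], q = (γ : ℤ[X]) * X := ⟨_, rfl⟩
  obtain ⟨PB2, hPB2⟩ : ∃ q : ℤ[X], q = (δ : ℤ[X]) * X := ⟨_, rfl⟩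
  obtain ⟨PH1, hPH1⟩ : ∃ q : ℤ[X], q = ((-r : ℤ) : ℤ[X]) * (PB1^2 + PB1) := ⟨_, rfl⟩
  obtain ⟨PH2, hPH2⟩ : ∃ q : ℤ[X], q = ((-r : ℤ) : ℤ[X]) * (PB1^2 - PB1) := ⟨_, rfl⟩
  -- Z-type nilpotency
  have Znil : ∀ G : ℤ[X], IsNilpotent (aeval a (((2*δ : ℤ) : ℤ[X]) * G)) := by
    intro G
    obtain ⟨k', rfl⟩ : ∃ k', k = k' + 1 := ⟨k - 1, by omega⟩
    refine ⟨k' + 1, ?_⟩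
    rw [← map_pow]
    have hh : (((2*δ:ℤ):ℤ[X]) * G)^(k'+1)
        = ((2^(k'+1)*δ : ℤ):ℤ[X]) * (((δ^k' : ℤ):ℤ[X]) * G^(k'+1)) := by
      push_cast; ring
    rw [hh, map_mul, map_intCast, h2δ, zero_mul]
  -- (i) PH1
  have hx1 : IsNilpotent ((aeval a PH1)^2 - aeval a PH1) := by
    refine nilHelper a γ r hγ2 hdγ ((X : ℤ[X])^3 - X) PH1
      ((γ:ℤ[X]) * (((-r:ℤ):ℤ[X])*((γ:ℤ[X])*X^2 + X))^2 - ((-r:ℤ):ℤ[X])*((γ:ℤ[X])*X^2 + X))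
      ((γ:ℤ[X]) * (X + 2))
      (4*(γ:ℤ[X])^2*((r:ℤ):ℤ[X])^2*X^4 + 4*(γ:ℤ[X])*((r:ℤ):ℤ[X])^2*X^4
        + 8*(γ:ℤ[X])*((r:ℤ):ℤ[X])^2*X^3 + 4*((r:ℤ):ℤ[X])^2*X^4
        + 8*((r:ℤ):ℤ[X])^2*X^3 + 4*((r:ℤ):ℤ[X])^2*X^2 + 4*((r:ℤ):ℤ[X])*X^2)
      (2*((r:ℤ):ℤ[X])*X^4 + 4*((r:ℤ):ℤ[X])*X^3 + 2*((r:ℤ):ℤ[X])*X^2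
        - X^4 - 2*X^3 + X^2 + 2*X)
      hq ?_ ?_
    · rw [hPH1, hPB1]; push_cast; ring
    · rw [hPH1, hPB1]; push_cast; ring
  -- (ii) PH2
  have hx2 : IsNilpotent ((aeval a PH2)^2 - aeval a PH2) := by
    refine nilHelper a γ r hγ2 hdγ ((X : ℤ[X])^3 - X) PH2
      ((γ:ℤ[X]) * (((-r:ℤ):ℤ[X])*((γ:ℤ[X])*X^2 - X))^2 - ((-r:ℤ):ℤ[X])*((γ:ℤ[X])*X^2 - X))
      ((γ:ℤ[X]) * (X - 2))
      (4*(γ:ℤ[X])^2*((r:ℤ):ℤ[X])^2*X^4 + 4*(γ:ℤ[X])*((r:ℤ):ℤ[X])^2*X^4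
        - 8*(γ:ℤ[X])*((r:ℤ):ℤ[X])^2*X^3 + 4*((r:ℤ):ℤ[X])^2*X^4
        - 8*((r:ℤ):ℤ[X])^2*X^3 + 4*((r:ℤ):ℤ[X])^2*X^2 + 4*((r:ℤ):ℤ[X])*X^2)
      (2*((r:ℤ):ℤ[X])*X^4 - 4*((r:ℤ):ℤ[X])*X^3 + 2*((r:ℤ):ℤ[X])*X^2
        - X^4 + 2*X^3 + X^2 - 2*X)
      hq ?_ ?_
    · rw [hPH2, hPB1]; push_cast; ring
    · rw [hPH2, hPB1]; push_cast; ring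
  -- (iii) PB2
  have hN0 : IsNilpotent (aeval a (PB2^3 - PB2)) := by
    have hI7 : PB2^3 - PB2
        = ((δ^3 : ℤ):ℤ[X]) * ((X : ℤ[X])^3 - X)
          + ((δ^2-δ : ℤ):ℤ[X]) * (((δ:ℤ[X])+1)*X) := by
      rw [hPB2]; push_cast; ring
    rw [hI7, map_add, kill_aeval a _ hδ2, add_zero, map_mul, map_intCast]
    exact (Int.cast_commute _ _).isNilpotent_mul_left hq
  have hstep1 : IsNilpotent (aeval a ((PB2^2 - PB2) * (PB2 - (δ:ℤ[X])))) := by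
    have hI8 : (PB2^2 - PB2) * (PB2 - (δ:ℤ[X]))
        = (PB2^3 - PB2) + ((2*δ : ℤ):ℤ[X]) * (X - (δ:ℤ[X])*X^2)
          + ((δ^2-δ : ℤ):ℤ[X]) * (X - (δ:ℤ[X])*X^2) := by
      rw [hPB2]; push_cast; ring
    have hthis := congrArg (aeval a) hI8
    rw [map_add, map_add, kill_aeval a _ hδ2, add_zero] at hthis
    rw [hthis]
    exact (aeval_img_comm a _ _).isNilpotent_add hN0 (Znil _)
  have hXsq : IsNilpotent ((aeval a (PB2^2 - PB2))^2) := by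
    have hI9 : (PB2^2-PB2)^2 = ((PB2^2-PB2)*(PB2 - (δ:ℤ[X]))) * PB2
        + ((δ^2-δ : ℤ):ℤ[X]) * ((δ:ℤ[X])^2*X^3 - (δ:ℤ[X])*X^2) := by
      rw [hPB2]; push_cast; ring
    have hthis := congrArg (aeval a) hI9
    rw [map_add, kill_aeval a _ hδ2, add_zero, map_mul, map_pow] at hthis
    rw [hthis]
    exact (aeval_img_comm a _ _).isNilpotent_mul_right hstep1
  have hx3 : IsNilpotent ((aeval a PB2)^2 - aeval a PB2) := by
    have := nilp_of_sq hXsq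
    rwa [map_sub, map_pow] at this
  -- lifts
  obtain ⟨m1, hm1⟩ := hx1
  obtain ⟨p1, hp10, hid1, hdef1⟩ := lift_idem m1 (aeval a PH1) hm1
  obtain ⟨m2, hm2⟩ := hx2
  obtain ⟨p2, hp20, hid2, hdef2⟩ := lift_idem m2 (aeval a PH2) hm2
  obtain ⟨m3, hm3⟩ := hx3
  obtain ⟨p3, hp30, hid3, hdef3⟩ := lift_idem m3 (aeval a PB2) hm3
  rw [← aeval_comp] at hid1 hdef1
  rw [← aeval_comp] at hid2 hdef2
  rw [← aeval_comp] at hid3 hdef3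
  -- coefficient facts
  have hc1 : (p1.comp PH1).coeff 0 = 0 := by
    rw [coeff_zero_eq_eval_zero, eval_comp]
    have h0 : PH1.eval 0 = 0 := by rw [hPH1, hPB1]; simp
    rw [h0, ← coeff_zero_eq_eval_zero, hp10]
  have hc2 : (p2.comp PH2).coeff 0 = 0 := by
    rw [coeff_zero_eq_eval_zero, eval_comp]
    have h0 : PH2.eval 0 = 0 := by rw [hPH2, hPB1]; simp
    rw [h0, ← coeff_zero_eq_eval_zero, hp20]
  have hc3 : (p3.comp PB2).coeff 0 = 0 := by
    rw [coeff_zero_eq_eval_zero, eval_comp]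
    have h0 : PB2.eval 0 = 0 := by rw [hPB2]; simp
    rw [h0, ← coeff_zero_eq_eval_zero, hp30]
  -- orthogonality
  obtain ⟨Q1, hQ1⟩ := Polynomial.X_dvd_iff.mpr hp10
  obtain ⟨Q3, hQ3⟩ := Polynomial.X_dvd_iff.mpr hp30
  have e1 : p1.comp PH1 = PH1 * (Q1.comp PH1) := by rw [hQ1, mul_comp, X_comp]
  have e3 : p3.comp PB2 = PB2 * (Q3.comp PB2) := by rw [hQ3, mul_comp, X_comp]
  have hzero : aeval a ((p1.comp PH1) * (p3.comp PB2)) = 0 := by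
    have eform : (p1.comp PH1) * (p3.comp PB2)
        = ((γ*δ : ℤ):ℤ[X]) * ((((-r:ℤ):ℤ[X])*((γ:ℤ[X])*X^2 + X)) * (Q1.comp PH1)
            * (X * (Q3.comp PB2))) := by
      rw [e1, e3, hPH1, hPB1, hPB2]; push_cast; ring
    rw [eform]; exact kill_aeval a _ hγδ _
  have h12 : aeval a (p1.comp PH1) * aeval a (p3.comp PB2) = 0 := by
    rw [← map_mul]; exact hzero
  have h21 : aeval a (p3.comp PB2) * aeval a (p1.comp PH1) = 0 := by
    rw [← map_mul, mul_comm]; exact hzero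
  -- the sum relation
  have hbsum : aeval a (PH1 - PH2 + PB2 - X) = 0 := by
    have e : PH1 - PH2 + PB2 - X
        = ((-((2*r+1)*γ) : ℤ):ℤ[X]) * X + ((γ+δ-1 : ℤ):ℤ[X]) * X := by
      rw [hPH1, hPH2, hPB1, hPB2]; push_cast; ring
    rw [e, map_add, kill_aeval a _ (by rw [Int.cast_neg, hdγ, neg_zero]) _,
      kill_aeval a _ (by rw [show γ+δ-1 = 0 from by omega, Int.cast_zero]) _, add_zero]
  -- assemble
  refine ⟨aeval a (p1.comp PH1 + p3.comp PB2), aeval a (p2.comp PH2),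
    aeval a (X - (p1.comp PH1 + p3.comp PB2) + p2.comp PH2), ?_, ?_, ?_, ?_, ?_, ?_, ?_, ?_, ?_, ?_⟩
  · refine corner_aeval e a hea hae _ ?_
    rw [coeff_add, hc1, hc3, add_zero]
  · exact corner_aeval e a hea hae _ hc2
  · refine corner_aeval e a hea hae _ ?_
    rw [coeff_add, coeff_sub, coeff_X_zero, coeff_add, hc1, hc3, hc2]
    ring
  · rw [map_add, add_mul, mul_add, mul_add, hid1, hid3, h12, h21, add_zero, zero_add]
  · exact hid2
  · -- nilpotency of n
    have hNsplit : (X : ℤ[X]) - (p1.comp PH1 + p3.comp PB2) + p2.comp PH2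
        = ((PH1 - p1.comp PH1) - (PH2 - p2.comp PH2) + (PB2 - p3.comp PB2))
          - (PH1 - PH2 + PB2 - X) := by ring
    rw [hNsplit, map_sub, hbsum, sub_zero, map_add, map_sub]
    have hn1 : IsNilpotent (aeval a (PH1 - p1.comp PH1)) := by
      rw [map_sub, ← neg_sub]
      exact hdef1.neg
    have hn2 : IsNilpotent (aeval a (PH2 - p2.comp PH2)) := by
      rw [map_sub, ← neg_sub]
      exact hdef2.neg
    have hn3 : IsNilpotent (aeval a (PB2 - p3.comp PB2)) := by
      rw [map_sub, ← neg_sub]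
      exact hdef3.neg
    exact (Commute.sub_left (aeval_img_comm a _ _) (aeval_img_comm a _ _)).isNilpotent_add
      ((aeval_img_comm a _ _).isNilpotent_sub hn1 hn2) hn3
  · exact aeval_img_comm a _ _
  · exact aeval_img_comm a _ _
  · exact aeval_img_comm a _ _
  · simp only [map_add, map_sub, aeval_X]
    abel


lemma global_fact (hR : IsWeaklyStrongly2NilClean R) :
    ∃ (k : ℕ) (d : ℤ), 1 ≤ k ∧ Odd d ∧ ((2^k * d : ℤ) : R) = 0 := by
  obtain ⟨f, g, n, hf, hg, hn, hfg, hfn, hgn, hcase⟩ := hR 3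
  rcases hcase with h | h | h | h
  · have h3 := L4 (f+g) n (3:R) (hfn.add_left hgn) hn h _ (idem_sum_cubic f g hf hg hfg)
    have h6 : IsNilpotent ((6:R)) := by
      have e : aeval (3:R) ((X:ℤ[X])^3 - 3*X^2 + 2*X) = (6:R) := by
        simp [map_ofNat]; norm_num
      rwa [e] at h3
    obtain ⟨j, hj⟩ := h6
    refine ⟨j+1, 3^(j+1), by omega, Odd.pow ⟨1, by ring⟩, ?_⟩
    have e2 : (2^(j+1) * 3^(j+1) : ℤ) = 6^(j+1) := by rw [← mul_pow]; norm_num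
    rw [e2]
    push_cast
    rw [pow_succ, hj, zero_mul]
  · have h3 := L4 (f-g) n (3:R) (hfn.sub_left hgn) hn h _ (idem_sub_cubic f g hf hg hfg)
    have h24 : IsNilpotent ((24:R)) := by
      have e : aeval (3:R) ((X:ℤ[X])^3 - X) = (24:R) := by
        simp [map_ofNat]; norm_num
      rwa [e] at h3
    obtain ⟨j, hj⟩ := h24
    refine ⟨3*(j+1), 3^(j+1), by omega, Odd.pow ⟨1, by ring⟩, ?_⟩
    have e2 : (2^(3*(j+1)) * 3^(j+1) : ℤ) = 24^(j+1) := by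
      rw [pow_mul, ← mul_pow]; norm_num
    rw [e2]
    push_cast
    rw [pow_succ, hj, zero_mul]
  · have h' : (3:R) = (g - f) + n := by rw [h]; abel
    have h3 := L4 (g-f) n (3:R) (hgn.sub_left hfn) hn h' _ (idem_sub_cubic g f hg hf hfg.symm)
    have h24 : IsNilpotent ((24:R)) := by
      have e : aeval (3:R) ((X:ℤ[X])^3 - X) = (24:R) := by
        simp [map_ofNat]; norm_num
      rwa [e] at h3
    obtain ⟨j, hj⟩ := h24
    refine ⟨3*(j+1), 3^(j+1), by omega, Odd.pow ⟨1, by ring⟩, ?_⟩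
    have e2 : (2^(3*(j+1)) * 3^(j+1) : ℤ) = 24^(j+1) := by
      rw [pow_mul, ← mul_pow]; norm_num
    rw [e2]
    push_cast
    rw [pow_succ, hj, zero_mul]
  · have h' : -(3:R) = (f+g) + (-n) := by rw [h]; abel
    have h3 := L4 (f+g) (-n) (-(3:R)) ((hfn.add_left hgn).neg_right) hn.neg h' _
      (idem_sum_cubic f g hf hg hfg)
    have h60 : IsNilpotent ((60:R)) := by
      have e : aeval (-(3:R)) ((X:ℤ[X])^3 - 3*X^2 + 2*X) = -(60:R) := by
        simp [map_ofNat]; norm_num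
      rw [e] at h3
      have h3' := h3.neg
      rwa [neg_neg] at h3'
    obtain ⟨j, hj⟩ := h60
    refine ⟨2*(j+1), 15^(j+1), by omega, Odd.pow ⟨7, by ring⟩, ?_⟩
    have e2 : (2^(2*(j+1)) * 15^(j+1) : ℤ) = 60^(j+1) := by
      rw [pow_mul, ← mul_pow]; norm_num
    rw [e2]
    push_cast
    rw [pow_succ, hj, zero_mul]

end CornerAux

theorem corner_wsnc {R : Type*} [Ring R] (hR : IsWeaklyStrongly2NilClean R)
    (e : R) (he : IsIdempotentElem e) (hne : e ≠ 0) :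
    ∀ a : R, a = e * a * e →
      ∃ f g n : R, f = e * f * e ∧ g = e * g * e ∧ n = e * n * e ∧
        f * f = f ∧ g * g = g ∧ IsNilpotent n ∧
        Commute f g ∧ Commute f n ∧ Commute g n ∧
        (a = f + g + n ∨ a = f - g + n ∨ a = -f + g + n ∨ a = -f - g + n) := by
  intro a ha
  have hea : e * a = a := by
    conv_lhs => rw [ha, ← mul_assoc, ← mul_assoc, he]
    exact ha.symm
  have hae : a * e = a := by
    conv_lhs => rw [ha, mul_assoc, he]
    exact ha.symm
  obtain ⟨k, d, hk, hodd, hKd⟩ := global_fact hR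
  obtain ⟨r, hr⟩ := hodd
  obtain ⟨s, t, hst⟩ : IsCoprime ((2:ℤ)^k) d := IsCoprime.pow_left ⟨-r, 1, by rw [hr]; ring⟩
  set γ := s * 2^k with hγdef
  set δ := t * d with hδdef
  have hsum : γ + δ = 1 := hst
  have hγδ : ((γ*δ : ℤ):R) = 0 := by
    have e0 : γ*δ = (s*t)*(2^k*d) := by rw [hγdef, hδdef]; ring
    rw [e0, Int.cast_mul, hKd, mul_zero]
  have hγ2 : ((γ^2-γ : ℤ):R) = 0 := by
    have e0 : γ^2-γ = -(γ*δ) + γ*(γ+δ-1) := by ring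
    rw [e0, show γ+δ-1 = 0 from by omega, mul_zero, add_zero, Int.cast_neg, hγδ, neg_zero]
  have hδ2 : ((δ^2-δ : ℤ):R) = 0 := by
    have e0 : δ^2-δ = -(γ*δ) + δ*(γ+δ-1) := by ring
    rw [e0, show γ+δ-1 = 0 from by omega, mul_zero, add_zero, Int.cast_neg, hγδ, neg_zero]
  have hdγ : (((2*r+1)*γ : ℤ):R) = 0 := by
    have e0 : (2*r+1)*γ = s*(2^k*d) := by rw [← hr, hγdef]; ring
    rw [e0, Int.cast_mul, hKd, mul_zero]
  have h2δ : ((2^k*δ : ℤ):R) = 0 := by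
    have e0 : (2:ℤ)^k*δ = t*(2^k*d) := by rw [hδdef]; ring
    rw [e0, Int.cast_mul, hKd, mul_zero]
  obtain ⟨f0, g0, n0, hf0, hg0, hn0, hfg0, hfn0, hgn0, hcase⟩ := hR a
  rcases hcase with h | h | h | h
  · have hq := L4 (f0+g0) n0 a (hfn0.add_left hgn0) hn0 h _ (idem_sum_cubic f0 g0 hf0 hg0 hfg0)
    obtain ⟨f, g, n, c1, c2, c3, c4, c5, c6, c7, c8, c9, heq⟩ :=
      mainA e a hea hae γ δ r hsum hγ2 hδ2 hγδ hdγ k hk h2δ hq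
    exact ⟨f, g, n, c1, c2, c3, c4, c5, c6, c7, c8, c9, Or.inl heq⟩
  · have hq := L4 (f0-g0) n0 a (hfn0.sub_left hgn0) hn0 h _ (idem_sub_cubic f0 g0 hf0 hg0 hfg0)
    obtain ⟨f, g, n, c1, c2, c3, c4, c5, c6, c7, c8, c9, heq⟩ :=
      mainB e a hea hae γ δ r hsum hγ2 hδ2 hγδ hdγ k hk h2δ hq
    exact ⟨f, g, n, c1, c2, c3, c4, c5, c6, c7, c8, c9, Or.inr (Or.inl heq)⟩
  · have h' : a = (g0 - f0) + n0 := by rw [h]; abel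
    have hq := L4 (g0-f0) n0 a (hgn0.sub_left hfn0) hn0 h' _ (idem_sub_cubic g0 f0 hg0 hf0 hfg0.symm)
    obtain ⟨f, g, n, c1, c2, c3, c4, c5, c6, c7, c8, c9, heq⟩ :=
      mainB e a hea hae γ δ r hsum hγ2 hδ2 hγδ hdγ k hk h2δ hq
    exact ⟨f, g, n, c1, c2, c3, c4, c5, c6, c7, c8, c9, Or.inr (Or.inl heq)⟩
  · have hea' : e * (-a) = -a := by rw [mul_neg, hea]
    have hae' : (-a) * e = -a := by rw [neg_mul, hae]
    have h' : -a = (f0+g0) + (-n0) := by rw [h]; abel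
    have hq := L4 (f0+g0) (-n0) (-a) ((hfn0.add_left hgn0).neg_right) hn0.neg h' _
      (idem_sum_cubic f0 g0 hf0 hg0 hfg0)
    obtain ⟨f, g, n', c1, c2, c3, c4, c5, c6, c7, c8, c9, heq⟩ :=
      mainA e (-a) hea' hae' γ δ r hsum hγ2 hδ2 hγδ hdγ k hk h2δ hq
    refine ⟨f, g, -n', c1, c2, ?_, c4, c5, c6.neg, c7, c8.neg_right, c9.neg_right,
      Or.inr (Or.inr (Or.inr ?_))⟩
    · rw [mul_neg, neg_mul, ← c3]
    · have hthis : a = -(f + g + n') := by rw [← heq, neg_neg]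
      rw [hthis]; abel
end
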